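/- Let A be a real n×n matrix that possesses the strong Perron–Frobenius property together with its transpose: ρ(A) is a simple positive eigenvalue of both A and Aᵀ, strictly dominant in modulus (|λ| < ρ(A) for all other eigenvalues λ), with positive right eigenvectors v and w respectively. Then (A/ρ(A))ᵏ converges as k → ∞ to the rank-one matrix v wᵀ/(wᵀ v), which is entrywise positive; consequently A is eventually positive. -/

import Mathlib

open Matrix Polynomial Filter
open scoped ENNReal NNReal

lemma aux_mem_spectrum {n : ℕ} (M : Matrix (Fin n) (Fin n) ℂ) (μ : ℂ)
    (x : Fin n → ℂ) (hx : x ≠ 0) (h : M *ᵥ x = μ • x) : μ ∈ spectrum ℂ M := by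
  rw [spectrum.mem_iff]
  intro hU
  rw [Matrix.isUnit_iff_isUnit_det] at hU
  have hdet : (algebraMap ℂ (Matrix (Fin n) (Fin n) ℂ) μ - M).det = 0 := by
    rw [← Matrix.exists_mulVec_eq_zero_iff]
    refine ⟨x, hx, ?_⟩
    rw [sub_mulVec, h, Algebra.algebraMap_eq_smul_one, smul_mulVec, one_mulVec, sub_self]
  rw [hdet] at hU
  exact hU.ne_zero rfl

lemma aux_exists_eigen {n : ℕ} (M : Matrix (Fin n) (Fin n) ℂ) (μ : ℂ)
    (h : μ ∈ spectrum ℂ M) : ∃ x ≠ (0 : Fin n → ℂ), M *ᵥ x = μ • x := by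
  rw [spectrum.mem_iff] at h
  have hdet : (algebraMap ℂ (Matrix (Fin n) (Fin n) ℂ) μ - M).det = 0 := by
    by_contra hne
    exact h ((Matrix.isUnit_iff_isUnit_det _).mpr (Ne.isUnit hne))
  rw [← Matrix.exists_mulVec_eq_zero_iff] at hdet
  obtain ⟨x, hx, hx0⟩ := hdet
  refine ⟨x, hx, ?_⟩
  rw [sub_mulVec, Algebra.algebraMap_eq_smul_one, smul_mulVec, one_mulVec, sub_eq_zero] at hx0
  exact hx0.symm

lemma aux_rootMult_two {n : ℕ} (M : Matrix (Fin n) (Fin n) ℂ) (lam : ℂ)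
    (x y : Fin n → ℂ) (hind : LinearIndependent ℂ ![x, y])
    (hx : M *ᵥ x = lam • x) (hy : M *ᵥ y = lam • y) :
    2 ≤ M.charpoly.rootMultiplicity lam := by
  classical
  have hxy : x ≠ y := by
    intro h
    have h01 : (![x, y] : Fin 2 → (Fin n → ℂ)) 0 = ![x, y] 1 := by simp [h]
    exact absurd (hind.injective h01) (by decide)
  have hs : LinearIndepOn ℂ id (Set.range ![x, y]) :=
    (linearIndepOn_id_range_iff hind.injective).mpr hind
  have hxs : x ∈ hs.extend (Set.subset_univ _) := hs.subset_extend _ ⟨0, rfl⟩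
  have hys : y ∈ hs.extend (Set.subset_univ _) := hs.subset_extend _ ⟨1, rfl⟩
  set b := Module.Basis.extend hs with hb
  haveI : Fintype (hs.extend (Set.subset_univ _)) := FiniteDimensional.fintypeBasisIndex b
  set i₀ : hs.extend (Set.subset_univ _) := ⟨x, hxs⟩ with hi₀
  set i₁ : hs.extend (Set.subset_univ _) := ⟨y, hys⟩ with hi₁
  have hi01 : i₀ ≠ i₁ := fun h => hxy (congrArg Subtype.val h)
  set f := Matrix.toLin' M with hf
  set N := LinearMap.toMatrix b b f with hN
  have hcp : N.charpoly = M.charpoly := by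
    rw [hN, LinearMap.charpoly_toMatrix]
    conv_rhs => rw [show M = LinearMap.toMatrix (Pi.basisFun ℂ (Fin n)) (Pi.basisFun ℂ (Fin n)) f by
      rw [LinearMap.toMatrix_eq_toMatrix', hf, LinearMap.toMatrix'_toLin']]
    rw [LinearMap.charpoly_toMatrix]
  -- column description
  have hcol : ∀ (i : hs.extend (Set.subset_univ _)) (z : Fin n → ℂ), (i : Fin n → ℂ) = z →
      M *ᵥ z = lam • z → ∀ j, N j i = lam * (if j = i then 1 else 0) := by
    intro i z hiz hz j
    rw [hN, LinearMap.toMatrix_apply, hf]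
    have hbi : b i = z := by rw [hb, Module.Basis.extend_apply_self, hiz]
    rw [hbi, Matrix.toLin'_apply, hz, _root_.map_smul, Finsupp.smul_apply, ← hbi, Module.Basis.repr_self,
      Finsupp.single_apply, smul_eq_mul]
    congr 1
    simp [eq_comm]
  have hcol0 := hcol i₀ x rfl hx
  have hcol1 := hcol i₁ y rfl hy
  -- charmatrix columns
  have hcm : ∀ (i : hs.extend (Set.subset_univ _)), (∀ j, N j i = lam * (if j = i then 1 else 0)) →
      ∀ j, charmatrix N j i = (X - C lam) * (if j = i then 1 else 0) := by
    intro i hi j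
    by_cases hji : j = i
    · subst hji
      rw [charmatrix_apply_eq, hi j]
      simp
    · rw [charmatrix_apply_ne _ _ _ hji, hi j]
      simp [hji]
  have hfac : (X - C lam) ^ 2 ∣ N.charpoly := by
    have h1 : N.charpoly = (X - C lam) *
        ((charmatrix N).updateCol i₀ (fun j => if j = i₀ then 1 else 0)).det := by
      rw [Matrix.charpoly]
      conv_lhs => rw [← Matrix.updateCol_eq_self (charmatrix N) i₀]
      rw [show (fun j => charmatrix N j i₀) = (X - C lam) • (fun j => if j = i₀ then (1:ℂ[X]) else 0)
        from funext fun j => by rw [hcm i₀ (hcol0) j]; simp [Pi.smul_apply, smul_eq_mul],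
        Matrix.det_updateCol_smul]
    have h2 : ((charmatrix N).updateCol i₀ (fun j => if j = i₀ then 1 else 0)).det = (X - C lam) *
        (((charmatrix N).updateCol i₀ (fun j => if j = i₀ then 1 else 0)).updateCol i₁
          (fun j => if j = i₁ then 1 else 0)).det := by
      set D := (charmatrix N).updateCol i₀ (fun j => if j = i₀ then (1:ℂ[X]) else 0) with hD
      conv_lhs => rw [← Matrix.updateCol_eq_self D i₁]
      rw [show (fun j => D j i₁) = (X - C lam) • (fun j => if j = i₁ then (1:ℂ[X]) else 0)
        from funext fun j => by
          rw [hD, Matrix.updateCol_apply, if_neg (Ne.symm hi01), hcm i₁ (hcol1) j]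
          simp [Pi.smul_apply, smul_eq_mul],
        Matrix.det_updateCol_smul]
    rw [h1, h2, ← mul_assoc, ← sq]
    exact Dvd.intro _ rfl
  rw [← hcp]
  exact (Polynomial.le_rootMultiplicity_iff N.charpoly_monic.ne_zero).mpr hfac

section analytic
attribute [local instance] Matrix.linftyOpNormedAddCommGroup Matrix.linftyOpNormedRing
  Matrix.linftyOpNormedAlgebra

lemma aux_entry_le {n : ℕ} (M : Matrix (Fin n) (Fin n) ℂ) (i j : Fin n) :
    ‖M i j‖ ≤ ‖M‖ := by
  have h1 : ‖M i j‖₊ ≤ ‖M‖₊ := by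
    rw [Matrix.linfty_opNNNorm_def]
    exact le_trans (Finset.single_le_sum (f := fun k => ‖M i k‖₊) (fun k _ => zero_le)
      (Finset.mem_univ j)) (Finset.le_sup (f := fun i => ∑ j, ‖M i j‖₊) (Finset.mem_univ i))
  exact h1

lemma aux_entry_tendsto_zero {n : ℕ} (M : Matrix (Fin n) (Fin n) ℂ)
    (h : ∀ μ ∈ spectrum ℂ M, ‖μ‖ < 1) (i j : Fin n) :
    Tendsto (fun k : ℕ => (M ^ k) i j) atTop (nhds 0) := by
  haveI : Nonempty (Fin n) := ⟨i⟩
  haveI : CompleteSpace (Matrix (Fin n) (Fin n) ℂ) := by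
    exact FiniteDimensional.complete ℂ _
  have hsr : spectralRadius ℂ M < 1 := by
    have := spectrum.spectralRadius_lt_of_forall_lt M (r := 1) ?_
    · simpa using this
    · intro z hz
      have := h z hz
      rw [← NNReal.coe_lt_coe]
      simpa using this
  obtain ⟨r, hr1, hr2⟩ := exists_between hsr
  have hgel := spectrum.pow_nnnorm_pow_one_div_tendsto_nhds_spectralRadius M
  have hev : ∀ᶠ k : ℕ in atTop, (‖M ^ k‖₊ : ℝ≥0∞) ^ (1 / (k : ℝ)) < r :=
    hgel.eventually_lt_const hr1
  have hrtop : r ≠ ⊤ := ne_top_of_lt hr2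
  have hrt1 : r.toReal < 1 := by
    rw [← ENNReal.toReal_one]
    exact ENNReal.toReal_strict_mono ENNReal.one_ne_top hr2
  have hbound : ∀ᶠ k : ℕ in atTop, ‖(M ^ k) i j‖ ≤ r.toReal ^ k := by
    filter_upwards [hev, eventually_ge_atTop 1] with k hk hk1
    have hkne : (k : ℝ) ≠ 0 := Nat.cast_ne_zero.mpr (by omega)
    have h1 : (‖M ^ k‖₊ : ℝ≥0∞) < r ^ k := by
      have h2 := ENNReal.rpow_lt_rpow hk (by positivity : (0:ℝ) < (k : ℝ))
      rwa [← ENNReal.rpow_mul, one_div, inv_mul_cancel₀ hkne, ENNReal.rpow_one,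
        ENNReal.rpow_natCast] at h2
    have h3 : ‖M ^ k‖ ≤ r.toReal ^ k := by
      have := ENNReal.toReal_mono (by simp [hrtop, ENNReal.pow_ne_top]) h1.le
      simpa [ENNReal.toReal_pow] using this
    exact le_trans (aux_entry_le _ i j) h3
  exact squeeze_zero_norm' hbound
    (tendsto_pow_atTop_nhds_zero_of_lt_one ENNReal.toReal_nonneg hrt1)

end analytic

lemma aux_mulVec_map {n : ℕ} (M : Matrix (Fin n) (Fin n) ℝ) (x : Fin n → ℝ) :
    (M.map (algebraMap ℝ ℂ)) *ᵥ (fun i => (x i : ℂ)) = fun i => ((M *ᵥ x) i : ℂ) := by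
  funext i
  simp only [Matrix.mulVec, dotProduct, Matrix.map_apply]
  push_cast
  rfl

theorem stmt19 (n : ℕ) (A : Matrix (Fin n) (Fin n) ℝ)
    (ρ : ℝ) (hρpos : 0 < ρ)
    (Ac : Matrix (Fin n) (Fin n) ℂ) (hAc : Ac = A.map (algebraMap ℝ ℂ))
    (hspec : (ρ : ℂ) ∈ spectrum ℂ Ac)
    (hsimple : (Ac.charpoly).rootMultiplicity (ρ : ℂ) = 1)
    (hdom : ∀ μ ∈ spectrum ℂ Ac, μ ≠ (ρ : ℂ) → ‖μ‖ < ρ)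
    (v w : Fin n → ℝ) (hv : ∀ i, 0 < v i) (hw : ∀ i, 0 < w i)
    (hAv : A *ᵥ v = ρ • v) (hAw : Aᵀ *ᵥ w = ρ • w) :
    Filter.Tendsto (fun k : ℕ => (ρ⁻¹ • A) ^ k) Filter.atTop
      (nhds ((w ⬝ᵥ v)⁻¹ • Matrix.vecMulVec v w)) ∧
    (∀ i j, 0 < ((w ⬝ᵥ v)⁻¹ • Matrix.vecMulVec v w) i j) ∧
    (∃ k₀ : ℕ, ∀ k ≥ k₀, ∀ i j, 0 < (A ^ k) i j) := by
  rcases Nat.eq_zero_or_pos n with hn | hn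
  · subst hn
    refine ⟨?_, fun i => i.elim0, ⟨0, fun k _ i => i.elim0⟩⟩
    have hconst : (fun k : ℕ => (ρ⁻¹ • A) ^ k) =
        fun _ => ((w ⬝ᵥ v)⁻¹ • vecMulVec v w) := by
      funext k
      ext i j
      exact i.elim0
    rw [hconst]
    exact tendsto_const_nhds
  haveI : Nonempty (Fin n) := ⟨⟨0, hn⟩⟩
  have hρ0 : ρ ≠ 0 := ne_of_gt hρpos
  set B := ρ⁻¹ • A with hB
  set P := (w ⬝ᵥ v)⁻¹ • vecMulVec v w with hP
  have hwv : 0 < w ⬝ᵥ v :=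
    Finset.sum_pos (fun i _ => mul_pos (hw i) (hv i)) Finset.univ_nonempty
  have hwv0 : w ⬝ᵥ v ≠ 0 := ne_of_gt hwv
  have hBv : B *ᵥ v = v := by
    rw [hB, smul_mulVec, hAv, smul_smul, inv_mul_cancel₀ hρ0, one_smul]
  have hwB : w ᵥ* B = w := by
    have h1 : w ᵥ* A = ρ • w := by rw [← Matrix.mulVec_transpose, hAw]
    rw [hB, ← Matrix.mulVec_transpose, Matrix.transpose_smul, smul_mulVec,
      Matrix.mulVec_transpose, h1, smul_smul, inv_mul_cancel₀ hρ0, one_smul]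
  have hBvv : B * vecMulVec v w = vecMulVec v w := by
    ext i j
    rw [Matrix.mul_apply]
    have : ∑ k, B i k * vecMulVec v w k j = (B *ᵥ v) i * w j := by
      simp only [vecMulVec_apply, Matrix.mulVec, dotProduct, Finset.sum_mul]
      exact Finset.sum_congr rfl fun k _ => by ring
    rw [this, hBv, vecMulVec_apply]
  have hvvB : vecMulVec v w * B = vecMulVec v w := by
    ext i j
    rw [Matrix.mul_apply]
    have : ∑ k, vecMulVec v w i k * B k j = v i * (w ᵥ* B) j := by
      simp only [vecMulVec_apply, Matrix.vecMul, dotProduct, Finset.mul_sum]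
      exact Finset.sum_congr rfl fun k _ => by ring
    rw [this, hwB, vecMulVec_apply]
  have hvvvv : vecMulVec v w * vecMulVec v w = (w ⬝ᵥ v) • vecMulVec v w := by
    ext i j
    rw [Matrix.mul_apply, Matrix.smul_apply, smul_eq_mul, dotProduct, Finset.sum_mul]
    refine Finset.sum_congr rfl fun k _ => ?_
    rw [vecMulVec_apply, vecMulVec_apply, vecMulVec_apply]
    ring
  have hBP : B * P = P := by rw [hP, Matrix.mul_smul, hBvv]
  have hPB : P * B = P := by rw [hP, Matrix.smul_mul, hvvB]
  have hPP : P * P = P := by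
    rw [hP, Matrix.smul_mul, Matrix.mul_smul, hvvvv, smul_smul, smul_smul]
    congr 1
    field_simp
  have hPv : P *ᵥ v = v := by
    rw [hP, smul_mulVec]
    have : vecMulVec v w *ᵥ v = (w ⬝ᵥ v) • v := by
      funext i
      simp only [Matrix.mulVec, dotProduct, vecMulVec_apply, Pi.smul_apply, smul_eq_mul,
        Finset.mul_sum]
      rw [Finset.sum_mul]
      exact Finset.sum_congr rfl fun k _ => by ring
    rw [this, smul_smul, inv_mul_cancel₀ hwv0, one_smul]
  have hBkP : ∀ k : ℕ, B ^ k * P = P := by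
    intro k
    induction k with
    | zero => rw [pow_zero, one_mul]
    | succ k ih => rw [pow_succ, mul_assoc, hBP, ih]
  have hpow : ∀ k : ℕ, 1 ≤ k → (B - P) ^ k = B ^ k - P := by
    intro k hk
    induction k, hk using Nat.le_induction with
    | base => rw [pow_one, pow_one]
    | succ k hk ih =>
      rw [pow_succ, ih, sub_mul, mul_sub, mul_sub, hPB, hPP, hBkP, ← pow_succ]
      abel
  -- complex part
  set φ := (algebraMap ℝ ℂ).mapMatrix (m := Fin n) with hφ
  set Cc := φ (B - P) with hCc
  have hentryC : ∀ (M : Matrix (Fin n) (Fin n) ℝ) (k : ℕ) (i j : Fin n),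
      ((φ M) ^ k) i j = (((M ^ k) i j : ℝ) : ℂ) := by
    intro M k i j
    rw [← map_pow, hφ, RingHom.mapMatrix_apply, Matrix.map_apply]
    rfl
  have hAcφ : Ac = φ A := by rw [hAc, hφ, RingHom.mapMatrix_apply]
  have hmapvec : ∀ (M : Matrix (Fin n) (Fin n) ℝ) (x : Fin n → ℝ),
      (φ M) *ᵥ (fun i => (x i : ℂ)) = fun i => ((M *ᵥ x) i : ℂ) := by
    intro M x
    rw [hφ, RingHom.mapMatrix_apply]
    exact aux_mulVec_map M x
  set vc : Fin n → ℂ := fun i => (v i : ℂ) with hvc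
  have hvc0 : vc ≠ 0 := by
    intro h
    have := congrFun h ⟨0, hn⟩
    rw [hvc] at this
    simp only [Pi.zero_apply, Complex.ofReal_eq_zero] at this
    exact absurd this (ne_of_gt (hv _))
  have hAvc : Ac *ᵥ vc = (ρ : ℂ) • vc := by
    rw [hAcφ, hvc, hmapvec, hAv]
    funext i
    simp [Complex.ofReal_mul]
  have hPvc : φ P *ᵥ vc = vc := by
    rw [hvc, hmapvec, hPv]
  have hspecC : ∀ μ ∈ spectrum ℂ Cc, ‖μ‖ < 1 := by
    intro μ hμ
    obtain ⟨x, hx0, hxe⟩ := aux_exists_eigen _ _ hμ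
    by_cases hμ0 : μ = 0
    · simp [hμ0]
    have hPcC : φ P * Cc = 0 := by
      rw [hCc, ← _root_.map_mul, mul_sub, hPB, hPP, sub_self, _root_.map_zero]
    have hPx : φ P *ᵥ x = 0 := by
      have h1 : φ P *ᵥ (Cc *ᵥ x) = 0 := by
        rw [Matrix.mulVec_mulVec, hPcC, Matrix.zero_mulVec]
      rw [hxe, Matrix.mulVec_smul] at h1
      rcases smul_eq_zero.mp h1 with h | h
      · exact absurd h hμ0
      · exact h
    have hBx : φ B *ᵥ x = μ • x := by
      have h2 : Cc = φ B - φ P := by rw [hCc, _root_.map_sub]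
      rw [h2, Matrix.sub_mulVec, hPx, sub_zero] at hxe
      exact hxe
    have hAx : Ac *ᵥ x = ((ρ : ℂ) * μ) • x := by
      have hA : A = ρ • B := by rw [hB, smul_smul, mul_inv_cancel₀ hρ0, one_smul]
      have h3 : Ac = (ρ : ℂ) • φ B := by
        rw [hAcφ, hφ, RingHom.mapMatrix_apply, RingHom.mapMatrix_apply]
        conv_lhs => rw [hA]
        ext i j
        simp [Matrix.map_apply, Complex.ofReal_mul]
      rw [h3, smul_mulVec, hBx, smul_smul]
    by_cases hμρ : (ρ : ℂ) * μ = (ρ : ℂ)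
    · exfalso
      have hμ1 : μ = 1 := by
        have hρc : (ρ : ℂ) ≠ 0 := Complex.ofReal_ne_zero.mpr hρ0
        field_simp at hμρ
        tauto
      have hind : LinearIndependent ℂ ![x, vc] := by
        rw [LinearIndependent.pair_iff]
        intro s t hst
        have h1 : φ P *ᵥ (s • x + t • vc) = 0 := by rw [hst, Matrix.mulVec_zero]
        rw [Matrix.mulVec_add, Matrix.mulVec_smul, Matrix.mulVec_smul, hPx, smul_zero,
          zero_add, hPvc] at h1
        have ht : t = 0 := by
          rcases smul_eq_zero.mp h1 with h | h
          · exact h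
          · exact absurd h hvc0
        subst ht
        rw [zero_smul, add_zero] at hst
        have hs : s = 0 := by
          rcases smul_eq_zero.mp hst with h | h
          · exact h
          · exact absurd h hx0
        exact ⟨hs, rfl⟩
      have h2 := aux_rootMult_two Ac (ρ : ℂ) x vc hind
        (by rw [hAx, hμ1, mul_one]) hAvc
      omega
    · have h4 := hdom _ (aux_mem_spectrum Ac _ x hx0 hAx) hμρ
      rw [norm_mul, Complex.norm_real, Real.norm_eq_abs, abs_of_pos hρpos] at h4
      exact lt_of_mul_lt_mul_left (by linarith) (le_of_lt hρpos)
  -- entrywise convergence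
  have hent : ∀ i j, Tendsto (fun k : ℕ => ((B - P) ^ k) i j) atTop (nhds 0) := by
    intro i j
    have h1 := aux_entry_tendsto_zero Cc hspecC i j
    rw [tendsto_zero_iff_norm_tendsto_zero]
    have h2 : (fun k : ℕ => ‖((B - P) ^ k) i j‖) = fun k => ‖(Cc ^ k) i j‖ := by
      funext k
      rw [hCc, hentryC, Complex.norm_real]
    rw [h2]
    simpa using h1.norm
  have htendE : ∀ i j, Tendsto (fun k : ℕ => (B ^ k) i j) atTop (nhds (P i j)) := by
    intro i j
    have h1 : Tendsto (fun k : ℕ => P i j + ((B - P) ^ k) i j) atTop (nhds (P i j + 0)) :=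
      tendsto_const_nhds.add (hent i j)
    rw [add_zero] at h1
    refine h1.congr' ?_
    filter_upwards [eventually_ge_atTop 1] with k hk
    rw [hpow k hk, Matrix.sub_apply]
    ring
  have hPpos : ∀ i j, 0 < P i j := by
    intro i j
    rw [hP, Matrix.smul_apply, vecMulVec_apply, smul_eq_mul]
    exact mul_pos (inv_pos.mpr hwv) (mul_pos (hv i) (hw j))
  refine ⟨?_, hPpos, ?_⟩
  · refine tendsto_pi_nhds.mpr ?_
    intro i
    rw [tendsto_pi_nhds]
    intro j
    exact htendE i j
  · have hevent : ∀ᶠ k : ℕ in atTop, ∀ i j, 0 < (B ^ k) i j := by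
      rw [eventually_all]
      intro i
      rw [eventually_all]
      intro j
      exact (htendE i j).eventually_const_lt (hPpos i j)
    obtain ⟨k₀, hk₀⟩ := eventually_atTop.mp hevent
    refine ⟨k₀, fun k hk i j => ?_⟩
    have hA : A = ρ • B := by rw [hB, smul_smul, mul_inv_cancel₀ hρ0, one_smul]
    have h5 : A ^ k = ρ ^ k • B ^ k := by rw [hA, _root_.smul_pow]
    rw [h5, Matrix.smul_apply, smul_eq_mul]
    exact mul_pos (pow_pos hρpos k) (hk₀ k hk i j)
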